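/- Let m = 2 and k_1 ≥ k_2 with k_1 + k_2 < n. Every Side-By-Side percentile mechanism — i.e., every mechanism that sorts the reports non-decreasingly and places the two facilities at two consecutive order statistics y_1 = x_i and y_2 = x_{i+1} — is Equilibrium Stable: for every input x, all pure Nash Equilibria of the induced FCFS game yield the same Social Welfare. -/

import Mathlib

open scoped Classical

noncomputable section

/-- Agent `i'` precedes agent `i` at a facility located at `y`: it is strictly closer,
or equally close with higher priority (smaller index). -/
def Prec {n : ℕ} (x : Fin n → ℝ) (y : ℝ) (i' i : Fin n) : Prop :=
  |x i' - y| < |x i - y| ∨ (|x i' - y| = |x i - y| ∧ i' < i)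

/-- Utility of agent `i` in the FCFS game: positions `x`, facility locations `y`,
capacities `k`, strategy profile `s`.  Agent `i` is served by facility `s i` iff fewer
than `k (s i)` agents selecting `s i` precede it. -/
def utility {n m : ℕ} (x : Fin n → ℝ) (y : Fin m → ℝ) (k : Fin m → ℕ)
    (s : Fin n → Fin m) (i : Fin n) : ℝ :=
  if {i' | s i' = s i ∧ Prec x (y (s i)) i' i}.ncard < k (s i)
  then 1 - |x i - y (s i)| else 0

/-- Pure Nash equilibrium of the FCFS game. -/
def isNE {n m : ℕ} (x : Fin n → ℝ) (y : Fin m → ℝ) (k : Fin m → ℕ)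
    (s : Fin n → Fin m) : Prop :=
  ∀ (i : Fin n) (j : Fin m),
    utility x y k (Function.update s i j) i ≤ utility x y k s i

/-- Social welfare of a strategy profile. -/
def SW {n m : ℕ} (x : Fin n → ℝ) (y : Fin m → ℝ) (k : Fin m → ℕ)
    (s : Fin n → Fin m) : ℝ :=
  ∑ i, utility x y k s i

def InUnit {N : ℕ} (x : Fin N → ℝ) : Prop := ∀ i, x i ∈ Set.Icc (0 : ℝ) 1

/-- The `i`-th (0-based) smallest entry of `x` (junk value `0` out of range). -/
def sortedVal {n : ℕ} (x : Fin n → ℝ) (i : ℕ) : ℝ :=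
  if h : i < n then x (Tuple.sort x ⟨i, h⟩) else 0

/-- The 1-based index `⌊(n-1)v⌋ + 1` used by the percentile mechanism. -/
def percIdx (n : ℕ) (v : ℝ) : ℕ := ⌊((n : ℝ) - 1) * v⌋.toNat + 1

/-- The location selected by the percentile `v`: the `(⌊(n-1)v⌋+1)`-th sorted report. -/
def percLoc {n : ℕ} (x : Fin n → ℝ) (v : ℝ) : ℝ :=
  sortedVal x (⌊((n : ℝ) - 1) * v⌋.toNat)

/-- The percentile mechanism induced by the percentile vector `v`. -/
def PM {n m : ℕ} (v : Fin m → ℝ) : (Fin n → ℝ) → Fin m → ℝ :=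
  fun x j => percLoc x (v j)

/-- A mechanism is Equilibrium Stable if on every instance all pure Nash equilibria of the
induced FCFS game yield the same Social Welfare. -/
def EquilibriumStable {n m : ℕ} (k : Fin m → ℕ)
    (M : (Fin n → ℝ) → Fin m → ℝ) : Prop :=
  ∀ x, InUnit x → ∀ s s', isNE x (M x) k s → isNE x (M x) k s' →
    SW x (M x) k s = SW x (M x) k s'

/-- A mechanism is absolutely truthful if no agent can increase its best-response utility
by misreporting, whatever the fixed strategies of the others. -/
def AbsolutelyTruthful {n m : ℕ} (k : Fin m → ℕ)
    (M : (Fin n → ℝ) → Fin m → ℝ) : Prop :=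
  ∀ x, InUnit x → ∀ (i : Fin n) (x' : ℝ), x' ∈ Set.Icc (0 : ℝ) 1 →
    ∀ s : Fin n → Fin m,
      (⨆ si : Fin m, utility x (M (Function.update x i x')) k (Function.update s i si) i) ≤
      (⨆ si : Fin m, utility x (M x) k (Function.update s i si) i)

/-- Optimal Social Welfare over facility locations in `[0,1]^m` and Nash equilibria. -/
def SWopt {n m : ℕ} (k : Fin m → ℕ) (x : Fin n → ℝ) : ℝ :=
  sSup {w | ∃ y : Fin m → ℝ, InUnit y ∧ ∃ s, isNE x y k s ∧ w = SW x y k s}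

/-- Social Welfare achieved by a mechanism (common value over all NE for ES mechanisms). -/
def SWmech {n m : ℕ} (k : Fin m → ℕ) (M : (Fin n → ℝ) → Fin m → ℝ)
    (x : Fin n → ℝ) : ℝ :=
  sSup {w | ∃ s, isNE x (M x) k s ∧ w = SW x (M x) k s}

/-- Approximation ratio of a mechanism. -/
def approxRatio {n m : ℕ} (k : Fin m → ℕ) (M : (Fin n → ℝ) → Fin m → ℝ) : ℝ :=
  sSup {r | ∃ x : Fin n → ℝ, InUnit x ∧ r = SWopt k x / SWmech k M x}

end

noncomputable section SBSAux
namespace SBSAux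
open Finset

variable {n : ℕ} (x : Fin n → ℝ) (y : Fin 2 → ℝ) (k : Fin 2 → ℕ) (s : Fin n → Fin 2)

/-- lexicographic key for the FCFS priority order at location `Y` -/
def key (Y : ℝ) (a : Fin n) : ℝ ×ₗ ℕ := toLex (|x a - Y|, (a : ℕ))

lemma key_inj (Y : ℝ) {a b : Fin n} (h : key x Y a = key x Y b) : a = b := by
  have := congrArg (fun p => (ofLex p).2) h
  simpa [key] using Fin.ext this

lemma prec_iff_key (Y : ℝ) (a b : Fin n) :
    Prec x Y a b ↔ key x Y a < key x Y b := by
  rw [key, key, Prod.Lex.lt_iff]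
  exact Iff.rfl

lemma prec_irrefl (Y : ℝ) (a : Fin n) : ¬ Prec x Y a a := by
  simp [prec_iff_key]

lemma prec_of_prec_of_lt (Y : ℝ) {a b c : Fin n} (h : Prec x Y a b)
    (h2 : |x b - Y| < |x c - Y|) : Prec x Y a c := by
  left
  rcases h with h | h
  · exact h.trans h2
  · exact h.1 ▸ h2

/-- number of agents choosing `j` that precede `a` at `y j` -/
def pcnt (j : Fin 2) (a : Fin n) : ℕ :=
  {i' | s i' = j ∧ Prec x (y j) i' a}.ncard

/-- `a` is served under profile `s` -/
def srv (a : Fin n) : Prop := pcnt x y s (s a) a < k (s a)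

/-- the set of agents served at facility `j` -/
def Mu (j : Fin 2) : Finset (Fin n) :=
  univ.filter (fun a => s a = j ∧ srv x y k s a)

lemma ncard_eq_filter (p : Fin n → Prop) :
    {i' | p i'}.ncard = (univ.filter p).card := by
  rw [Set.ncard_eq_toFinset_card']
  simp [Set.toFinset_setOf]

lemma utility_eq (a : Fin n) :
    utility x y k s a = if srv x y k s a then 1 - |x a - y (s a)| else 0 := by
  by_cases h : {i' | s i' = s a ∧ Prec x (y (s a)) i' a}.ncard < k (s a) <;>
    simp [utility, srv, pcnt, h]

lemma utility_nonneg (a : Fin n) (hx : ∀ b, x b ∈ Set.Icc (0:ℝ) 1)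
    (hy : ∀ j, y j ∈ Set.Icc (0:ℝ) 1) : 0 ≤ utility x y k s a := by
  rw [utility_eq]
  split
  · have h1 := (hx a).1; have h2 := (hx a).2
    have h3 := (hy (s a)).1; have h4 := (hy (s a)).2
    have : |x a - y (s a)| ≤ 1 := abs_sub_le_iff.2 ⟨by linarith, by linarith⟩
    linarith
  · exact le_refl 0

lemma utility_update (u : Fin n) (j : Fin 2) :
    utility x y k (Function.update s u j) u
      = if pcnt x y s j u < k j then 1 - |x u - y j| else 0 := by
  have hu : Function.update s u j u = j := Function.update_self u j s
  have hset : {i' | Function.update s u j i' = j ∧ Prec x (y j) i' u}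
      = {i' | s i' = j ∧ Prec x (y j) i' u} := by
    ext i'
    by_cases h : i' = u
    · subst h
      simp [prec_irrefl]
    · simp [Function.update_of_ne h]
  rw [utility, pcnt]
  simp only [hu, hset]


lemma pcnt_eq_filter (j : Fin 2) (a : Fin n) :
    pcnt x y s j a = (univ.filter (fun i' => s i' = j ∧ Prec x (y j) i' a)).card := by
  rw [pcnt, ncard_eq_filter]
  congr

/-- at most `k j` agents are served at facility `j` (any profile) -/
lemma card_Mu_le (j : Fin 2) : (Mu x y k s j).card ≤ k j := by
  by_contra hlt
  push_neg at hlt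
  have hne : (Mu x y k s j).Nonempty := by
    rw [← Finset.card_pos]; omega
  obtain ⟨a, ha, hmax⟩ := (Mu x y k s j).exists_max_image (key x (y j)) hne
  have haj : s a = j ∧ srv x y k s a := by
    simpa [Mu] using ha
  -- all other members of Mu precede a
  have hsub : (Mu x y k s j).erase a ⊆
      univ.filter (fun i' => s i' = j ∧ Prec x (y j) i' a) := by
    intro b hb
    rw [Finset.mem_erase] at hb
    obtain ⟨hba, hbMu⟩ := hb
    have hbj : s b = j ∧ srv x y k s b := by simpa [Mu] using hbMu
    have hble := hmax b hbMu
    have : key x (y j) b < key x (y j) a := by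
      rcases lt_or_eq_of_le hble with h | h
      · exact h
      · exact absurd (key_inj x (y j) h) hba
    simp only [Finset.mem_filter, Finset.mem_univ, true_and]
    exact ⟨hbj.1, (prec_iff_key x (y j) b a).2 this⟩
  have hcard : k j ≤ ((Mu x y k s j).erase a).card := by
    rw [Finset.card_erase_of_mem ha]; omega
  have h1 : k j ≤ pcnt x y s j a := by
    rw [pcnt_eq_filter]
    exact hcard.trans (Finset.card_le_card hsub)
  have h2 := haj.2
  rw [srv, haj.1] at h2
  omega

/-- there exists a set of `m` key-smallest elements of any finset -/
lemma exists_bot (C : Finset (Fin n)) (Y : ℝ) (m : ℕ) (hm : m ≤ C.card) :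
    ∃ T ⊆ C, T.card = m ∧ ∀ a ∈ T, ∀ b ∈ C, b ∉ T → key x Y a < key x Y b := by
  induction m with
  | zero => exact ⟨∅, Finset.empty_subset _, rfl, by simp⟩
  | succ m ih =>
    obtain ⟨T, hTC, hTcard, hTlt⟩ := ih (by omega)
    have hne : (C \ T).Nonempty := by
      rw [← Finset.card_pos, Finset.card_sdiff_of_subset hTC]; omega
    obtain ⟨w, hw, hwmin⟩ := (C \ T).exists_min_image (key x Y) hne
    rw [Finset.mem_sdiff] at hw
    refine ⟨insert w T, ?_, ?_, ?_⟩
    · exact Finset.insert_subset hw.1 hTC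
    · rw [Finset.card_insert_of_notMem hw.2, hTcard]
    · intro a ha b hb hbT
      rw [Finset.mem_insert] at ha
      have hbT' : b ∉ T := fun h => hbT (Finset.mem_insert_of_mem h)
      have hbw : b ≠ w := fun h => hbT (h ▸ Finset.mem_insert_self _ _)
      rcases ha with rfl | ha
      · have := hwmin b (Finset.mem_sdiff.2 ⟨hb, hbT'⟩)
        rcases lt_or_eq_of_le this with h | h
        · exact h
        · exact absurd (key_inj x Y h) hbw.symm
      · exact hTlt a ha b hb hbT'

/-- if at least `k j` agents choose `j`, facility `j` is full -/
lemma full_of_choosers (j : Fin 2)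
    (h : k j ≤ (univ.filter (fun a => s a = j)).card) :
    k j ≤ (Mu x y k s j).card := by
  obtain ⟨T, hTC, hTcard, hTlt⟩ := exists_bot x (univ.filter (fun a => s a = j)) (y j) (k j) h
  have hsub : T ⊆ Mu x y k s j := by
    intro a ha
    have haC := hTC ha
    rw [Finset.mem_filter] at haC
    have hsa : s a = j := haC.2
    have hsrv : srv x y k s a := by
      rw [srv, hsa]
      have hsub2 : univ.filter (fun i' => s i' = j ∧ Prec x (y j) i' a) ⊆ T.erase a := by
        intro b hb
        rw [Finset.mem_filter] at hb
        obtain ⟨-, hbj, hbprec⟩ := hb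
        have hbC : b ∈ univ.filter (fun a => s a = j) := by
          simp [hbj]
        have hbT : b ∈ T := by
          by_contra hbT
          have := hTlt a ha b hbC hbT
          have h2 := (prec_iff_key x (y j) b a).1 hbprec
          exact absurd (this.trans h2) (lt_irrefl _)
        refine Finset.mem_erase.2 ⟨?_, hbT⟩
        intro hba
        exact prec_irrefl x (y j) a (hba ▸ hbprec)
      have := Finset.card_le_card hsub2
      rw [Finset.card_erase_of_mem ha, hTcard] at this
      rw [pcnt_eq_filter]
      have hk : 0 < k j := hTcard ▸ Finset.card_pos.2 ⟨a, ha⟩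
      omega
    simp [Mu, hsa, hsrv]
  calc k j = T.card := hTcard.symm
  _ ≤ _ := Finset.card_le_card hsub

/-- blocking: if `k j` choosers of `j` precede `a`, every agent served at `j`
is weakly closer to `y j` than `a`. -/
lemma blk (j : Fin 2) (a : Fin n) (h : k j ≤ pcnt x y s j a) :
    ∀ b ∈ Mu x y k s j, |x b - y j| ≤ |x a - y j| := by
  intro b hb
  by_contra hlt
  push_neg at hlt
  have hbj : s b = j ∧ srv x y k s b := by simpa [Mu] using hb
  have hsub : univ.filter (fun i' => s i' = j ∧ Prec x (y j) i' a)
      ⊆ univ.filter (fun i' => s i' = j ∧ Prec x (y j) i' b) := by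
    intro c hc
    rw [Finset.mem_filter] at hc ⊢
    exact ⟨hc.1, hc.2.1, prec_of_prec_of_lt x (y j) hc.2.2 hlt⟩
  have h2 : k j ≤ pcnt x y s j b := by
    rw [pcnt_eq_filter] at h ⊢
    exact h.trans (Finset.card_le_card hsub)
  have := hbj.2
  rw [srv, hbj.1] at this
  omega


lemma ne_fact (hNE : isNE x y k s) (a : Fin n) (j : Fin 2)
    (h : ¬ (s a = j ∧ srv x y k s a)) :
    (1 - |x a - y j| ≤ utility x y k s a) ∨ (k j ≤ pcnt x y s j a) := by
  by_cases hsaj : s a = j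
  · right
    have : ¬ srv x y k s a := fun hs => h ⟨hsaj, hs⟩
    rw [srv, hsaj] at this
    omega
  · have hne := hNE a j
    rw [utility_update] at hne
    by_cases hp : pcnt x y s j a < k j
    · rw [if_pos hp] at hne
      exact Or.inl hne
    · right; omega

lemma uns_fact (hNE : isNE x y k s) (a : Fin n) (ha : ¬ srv x y k s a) (j : Fin 2) :
    (1 - |x a - y j| ≤ 0) ∨ (∀ b ∈ Mu x y k s j, |x b - y j| ≤ |x a - y j|) := by
  rcases ne_fact x y k s hNE a j (fun hh => ha hh.2) with h | h
  · left
    rw [utility_eq, if_neg ha] at h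
    exact h
  · exact Or.inr (blk x y k s j a h)

lemma srv_cross (hNE : isNE x y k s) (a : Fin n) (ha : srv x y k s a) (j : Fin 2) :
    (1 - |x a - y j| ≤ 1 - |x a - y (s a)|) ∨
      (∀ b ∈ Mu x y k s j, |x b - y j| ≤ |x a - y j|) := by
  by_cases hj : s a = j
  · left; rw [hj]
  · rcases ne_fact x y k s hNE a j (fun hh => hj hh.1) with h | h
    · left
      rw [utility_eq, if_pos ha] at h
      exact h
    · exact Or.inr (blk x y k s j a h)

lemma notfull_fact (hNE : isNE x y k s) (j : Fin 2) (hnf : (Mu x y k s j).card < k j)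
    (a : Fin n) (h : ¬ (s a = j ∧ srv x y k s a)) :
    1 - |x a - y j| ≤ utility x y k s a := by
  have hC : (univ.filter (fun b => s b = j)).card < k j := by
    by_contra hC
    push_neg at hC
    exact absurd (full_of_choosers x y k s j hC) (by omega)
  have hpc : pcnt x y s j a < k j := by
    rw [pcnt_eq_filter]
    have hsub : univ.filter (fun i' => s i' = j ∧ Prec x (y j) i' a)
        ⊆ univ.filter (fun b => s b = j) := by
      intro b hb
      rw [Finset.mem_filter] at hb ⊢
      exact ⟨hb.1, hb.2.1⟩
    exact (Finset.card_le_card hsub).trans_lt hC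
  rcases ne_fact x y k s hNE a j h with h' | h'
  · exact h'
  · omega

lemma uns_nonempty (hn : k 0 + k 1 < n) :
    (univ.filter (fun a => ¬ srv x y k s a)).Nonempty := by
  have hsub : univ.filter (fun a => srv x y k s a) ⊆ Mu x y k s 0 ∪ Mu x y k s 1 := by
    intro a ha
    rw [Finset.mem_filter] at ha
    rw [Finset.mem_union]
    have : s a = 0 ∨ s a = 1 := by omega
    rcases this with h | h
    · left; simp [Mu, h, ha.2]
    · right; simp [Mu, h, ha.2]
  have h1 : (univ.filter (fun a => srv x y k s a)).card ≤ k 0 + k 1 := by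
    calc (univ.filter (fun a => srv x y k s a)).card
        ≤ (Mu x y k s 0 ∪ Mu x y k s 1).card := Finset.card_le_card hsub
      _ ≤ (Mu x y k s 0).card + (Mu x y k s 1).card := Finset.card_union_le _ _
      _ ≤ k 0 + k 1 := Nat.add_le_add (card_Mu_le x y k s 0) (card_Mu_le x y k s 1)
  have h2 := Finset.card_filter_add_card_filter_not
    (s := (univ : Finset (Fin n))) (p := fun a => srv x y k s a)
  rw [Finset.card_univ, Fintype.card_fin] at h2
  rw [← Finset.card_pos]
  omega


/-- welfare weight of agent `a` at facility `j` -/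
def Wv (a : Fin n) (j : Fin 2) : ℝ := 1 - |x a - y j|

lemma sum_ite_srv (t : Fin n → Fin 2) (c : Fin 2 → ℝ) :
    ∑ a, (if srv x y k t a then c (t a) else 0)
      = ∑ j : Fin 2, ((Mu x y k t j).card : ℝ) * c j := by
  rw [← Finset.sum_fiberwise (univ : Finset (Fin n)) t
      (fun a => if srv x y k t a then c (t a) else 0)]
  apply Finset.sum_congr rfl
  intro j _
  have h1 : ∀ a ∈ univ.filter (fun i => t i = j), (if srv x y k t a then c (t a) else 0)
      = (if srv x y k t a then c j else 0) := by
    intro a ha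
    rw [Finset.mem_filter] at ha
    rw [ha.2]
  rw [Finset.sum_congr rfl h1, ← Finset.sum_filter, Finset.sum_const]
  have h2 : (univ.filter (fun i => t i = j)).filter (fun a => srv x y k t a)
      = Mu x y k t j := by
    ext a
    simp [Mu, Finset.mem_filter, and_assoc]
  rw [h2, nsmul_eq_mul]

/-- accounting: a price vector `c` dual-feasible for the NE `s` bounds the welfare
of any profile `s'` by the welfare of `s`. -/
lemma account (s' : Fin n → Fin 2) (c : Fin 2 → ℝ)
    (hc0 : ∀ j, 0 ≤ c j)
    (hck : ∀ j, (k j : ℝ) * c j ≤ ((Mu x y k s j).card : ℝ) * c j)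
    (hcu : ∀ a, ¬ srv x y k s a → ∀ j, Wv x y a j ≤ c j)
    (hcs : ∀ a, srv x y k s a →
      c (s a) ≤ Wv x y a (s a) ∧ ∀ j, Wv x y a j - c j ≤ Wv x y a (s a) - c (s a)) :
    SW x y k s' ≤ SW x y k s := by
  set π : Fin n → ℝ :=
    fun a => max 0 (max (Wv x y a 0 - c 0) (Wv x y a 1 - c 1)) with hπ
  have hπj : ∀ a (j : Fin 2), Wv x y a j - c j ≤ π a := by
    intro a j
    have : j = 0 ∨ j = 1 := by omega
    rcases this with rfl | rfl
    · exact le_trans (le_max_left _ _) (le_max_right _ _)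
    · exact le_trans (le_max_right _ _) (le_max_right _ _)
  have hπ0 : ∀ a, 0 ≤ π a := fun a => le_max_left _ _
  -- Step A
  have stepA : SW x y k s' ≤ (∑ a, π a) + ∑ j : Fin 2, (k j : ℝ) * c j := by
    have hpt : ∀ a, utility x y k s' a ≤ π a + (if srv x y k s' a then c (s' a) else 0) := by
      intro a
      rw [utility_eq]
      by_cases h : srv x y k s' a
      · rw [if_pos h, if_pos h]
        have := hπj a (s' a)
        show Wv x y a (s' a) ≤ _
        linarith
      · rw [if_neg h, if_neg h]
        simpa using hπ0 a
    calc SW x y k s' ≤ ∑ a, (π a + (if srv x y k s' a then c (s' a) else 0)) :=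
          Finset.sum_le_sum (fun a _ => hpt a)
      _ = (∑ a, π a) + ∑ a, (if srv x y k s' a then c (s' a) else 0) := Finset.sum_add_distrib
      _ ≤ _ := by
          rw [sum_ite_srv]
          have : ∀ j : Fin 2, ((Mu x y k s' j).card : ℝ) * c j ≤ (k j : ℝ) * c j := by
            intro j
            exact mul_le_mul_of_nonneg_right
              (by exact_mod_cast card_Mu_le x y k s' j) (hc0 j)
          exact add_le_add_right (Finset.sum_le_sum (fun j _ => this j)) _
  -- Step B
  have stepB : (∑ a, π a) + ∑ j : Fin 2, (k j : ℝ) * c j ≤ SW x y k s := by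
    have h1 : ∑ j : Fin 2, (k j : ℝ) * c j
        ≤ ∑ j : Fin 2, ((Mu x y k s j).card : ℝ) * c j :=
      Finset.sum_le_sum (fun j _ => hck j)
    have h2 : (∑ a, π a) + ∑ j : Fin 2, ((Mu x y k s j).card : ℝ) * c j ≤ SW x y k s := by
      rw [← sum_ite_srv, ← Finset.sum_add_distrib]
      apply Finset.sum_le_sum
      intro a _
      rw [utility_eq]
      by_cases h : srv x y k s a
      · rw [if_pos h, if_pos h]
        obtain ⟨hca, hcj⟩ := hcs a h
        have : π a ≤ Wv x y a (s a) - c (s a) := by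
          rw [hπ]
          apply max_le
          · linarith
          · apply max_le
            · exact hcj 0
            · exact hcj 1
        show π a + c (s a) ≤ Wv x y a (s a)
        linarith
      · rw [if_neg h, if_neg h]
        have : π a ≤ 0 := by
          rw [hπ]
          apply max_le le_rfl
          apply max_le
          · have := hcu a h 0; linarith
          · have := hcu a h 1; linarith
        linarith
    linarith
  linarith


lemma sw_le (hNE : isNE x y k s) (s' : Fin n → Fin 2)
    (hn : k 0 + k 1 < n)
    (hx : ∀ b, x b ∈ Set.Icc (0:ℝ) 1) (hy : ∀ j, y j ∈ Set.Icc (0:ℝ) 1)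
    (hy01 : y 0 ≤ y 1) (hadj : ∀ a, x a ≤ y 0 ∨ y 1 ≤ x a) :
    SW x y k s' ≤ SW x y k s := by
  set δ : ℝ := y 1 - y 0 with hδdef
  have hδ : 0 ≤ δ := by simp [hδdef]; linarith
  have hWnn : ∀ a j, 0 ≤ Wv x y a j := by
    intro a j
    have h1 := (hx a).1; have h2 := (hx a).2
    have h3 := (hy j).1; have h4 := (hy j).2
    have : |x a - y j| ≤ 1 := abs_sub_le_iff.2 ⟨by linarith, by linarith⟩
    rw [Wv]; linarith
  have hside : ∀ a, Wv x y a 0 = Wv x y a 1 + δ ∨ Wv x y a 1 = Wv x y a 0 + δ := by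
    intro a
    rcases hadj a with h | h
    · left
      have e0 : |x a - y 0| = y 0 - x a := by
        rw [abs_sub_comm]; exact abs_of_nonneg (by linarith)
      have e1 : |x a - y 1| = y 1 - x a := by
        rw [abs_sub_comm]; exact abs_of_nonneg (by linarith)
      rw [Wv, Wv, e0, e1]; ring
    · right
      have e0 : |x a - y 0| = x a - y 0 := abs_of_nonneg (by linarith)
      have e1 : |x a - y 1| = x a - y 1 := abs_of_nonneg (by linarith)
      rw [Wv, Wv, e0, e1]; ring
  have hW01 : ∀ a, Wv x y a 0 ≤ Wv x y a 1 + δ := by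
    intro a; rcases hside a with h | h <;> linarith
  have hW10 : ∀ a, Wv x y a 1 ≤ Wv x y a 0 + δ := by
    intro a; rcases hside a with h | h <;> linarith
  have hUne := uns_nonempty x y k s hn
  set bb : Fin 2 → ℝ :=
    fun j => max 0 ((univ.filter (fun a => ¬ srv x y k s a)).sup' hUne
      (fun u => Wv x y u j)) with hbbdef
  have hb0 : ∀ j, 0 ≤ bb j := fun j => le_max_left _ _
  have hbu : ∀ (j : Fin 2) u, ¬ srv x y k s u → Wv x y u j ≤ bb j := by
    intro j u hu
    refine le_trans (Finset.le_sup' (fun u => Wv x y u j) ?_) (le_max_right _ _)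
    simp [hu]
  have hble : ∀ (j : Fin 2) (M : ℝ), 0 ≤ M →
      (∀ u, ¬ srv x y k s u → Wv x y u j ≤ M) → bb j ≤ M := by
    intro j M hM h
    apply max_le hM
    apply Finset.sup'_le
    intro u hu
    rw [Finset.mem_filter] at hu
    exact h u hu.2
  have hbmu : ∀ (j : Fin 2), ∀ a ∈ Mu x y k s j, bb j ≤ Wv x y a j := by
    intro j a ha
    apply hble j _ (hWnn a j)
    intro u hu
    rcases uns_fact x y k s hNE u hu j with h | h
    · have := hWnn a j; rw [Wv]; rw [Wv] at this ⊢; linarith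
    · have := h a ha
      rw [Wv, Wv]; linarith
  have hbnf : ∀ j, (Mu x y k s j).card < k j → bb j = 0 := by
    intro j hnf
    refine le_antisymm (hble j 0 le_rfl ?_) (hb0 j)
    intro u hu
    have h := notfull_fact x y k s hNE j hnf u (fun hh => hu hh.2)
    rw [utility_eq, if_neg hu] at h
    exact h
  have hbc0 : bb 0 ≤ bb 1 + δ := by
    apply hble 0 _ (by have := hb0 1; linarith)
    intro u hu
    have := hbu 1 u hu
    have := hW01 u
    linarith
  have hbc1 : bb 1 ≤ bb 0 + δ := by
    apply hble 1 _ (by have := hb0 0; linarith)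
    intro u hu
    have := hbu 0 u hu
    have := hW10 u
    linarith
  -- it suffices to exhibit dual prices
  suffices hc : ∃ c : Fin 2 → ℝ, (∀ j, 0 ≤ c j) ∧
      (∀ j, (Mu x y k s j).card < k j → c j = 0) ∧
      (∀ a, ¬ srv x y k s a → ∀ j, Wv x y a j ≤ c j) ∧
      (∀ a, srv x y k s a → c (s a) ≤ Wv x y a (s a) ∧
        ∀ j, Wv x y a j - c j ≤ Wv x y a (s a) - c (s a)) by
    obtain ⟨c, hc0, hcnf, hcu, hcs⟩ := hc
    apply account x y k s s' c hc0 _ hcu hcs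
    intro j
    rcases lt_or_eq_of_le (card_Mu_le x y k s j) with h | h
    · rw [hcnf j h]; simp
    · rw [h]
  -- dichotomy
  have hdich : ¬ ((∃ a ∈ Mu x y k s 1, Wv x y a 1 < Wv x y a 0) ∧
      (∃ a ∈ Mu x y k s 0, Wv x y a 0 < Wv x y a 1)) := by
    rintro ⟨⟨a, ha, hav⟩, ⟨b, hb, hbv⟩⟩
    have haj : s a = 1 ∧ srv x y k s a := by simpa [Mu] using ha
    have hbj : s b = 0 ∧ srv x y k s b := by simpa [Mu] using hb
    have h1 : ∀ b' ∈ Mu x y k s 0, |x b' - y 0| ≤ |x a - y 0| := by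
      rcases srv_cross x y k s hNE a haj.2 0 with h | h
      · rw [haj.1] at h
        rw [Wv, Wv] at hav
        linarith
      · exact h
    have h2 : ∀ a' ∈ Mu x y k s 1, |x a' - y 1| ≤ |x b - y 1| := by
      rcases srv_cross x y k s hNE b hbj.2 1 with h | h
      · rw [hbj.1] at h
        rw [Wv, Wv] at hbv
        linarith
      · exact h
    have e1 := h1 b hb
    have e2 := h2 a ha
    rw [Wv, Wv] at hav hbv
    linarith
  by_cases hSL : ∃ a ∈ Mu x y k s 1, Wv x y a 1 < Wv x y a 0
  · -- facility 1 serves a strictly-left agent β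
    obtain ⟨β, hβ, hβv⟩ := hSL
    have hβj : s β = 1 ∧ srv x y k s β := by simpa [Mu] using hβ
    have hnSR : ∀ b ∈ Mu x y k s 0, ¬ (Wv x y b 0 < Wv x y b 1) := by
      intro b hb hbv
      exact hdich ⟨⟨β, hβ, hβv⟩, ⟨b, hb, hbv⟩⟩
    have hβblock : ∀ b ∈ Mu x y k s 0, Wv x y β 0 ≤ Wv x y b 0 := by
      intro b hb
      rcases srv_cross x y k s hNE β hβj.2 0 with h | h
      · rw [hβj.1] at h
        rw [Wv, Wv] at hβv
        linarith
      · have := h b hb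
        rw [Wv, Wv]; linarith
    have hF0 : ¬ ((Mu x y k s 0).card < k 0) := by
      intro hnf
      have h := notfull_fact x y k s hNE 0 hnf β (by
        intro hh
        rw [hh.1] at hβj
        exact absurd hβj.1 (by decide))
      rw [utility_eq, if_pos hβj.2, hβj.1] at h
      rw [Wv, Wv] at hβv
      linarith
    have hsideβ : Wv x y β 0 = Wv x y β 1 + δ := by
      rcases hside β with h | h
      · exact h
      · linarith
    refine ⟨![bb 1 + δ, bb 1], ?_, ?_, ?_, ?_⟩
    · intro j
      have : j = 0 ∨ j = 1 := by omega
      rcases this with rfl | rfl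
      · simp [Matrix.cons_val_zero]; have := hb0 1; linarith
      · simpa [Matrix.cons_val_one] using hb0 1
    · intro j hj
      have : j = 0 ∨ j = 1 := by omega
      rcases this with rfl | rfl
      · exact absurd hj hF0
      · simpa [Matrix.cons_val_one] using hbnf 1 hj
    · intro u hu j
      have : j = 0 ∨ j = 1 := by omega
      rcases this with rfl | rfl
      · have h1 := hW01 u
        have h2 := hbu 1 u hu
        simp only [Matrix.cons_val_zero]
        linarith
      · simpa [Matrix.cons_val_one] using hbu 1 u hu
    · intro a ha
      have hsa : s a = 0 ∨ s a = 1 := by omega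
      rcases hsa with hsa | hsa
      · have haMu : a ∈ Mu x y k s 0 := by simp [Mu, hsa, ha]
        have hkey : bb 1 + δ ≤ Wv x y a 0 := by
          have hnn : 0 ≤ Wv x y a 0 - δ := by
            have h1 := hβblock a haMu
            have h2 := hWnn β 1
            linarith
          have : bb 1 ≤ Wv x y a 0 - δ := by
            apply hble 1 _ hnn
            intro u hu
            rcases uns_fact x y k s hNE u hu 1 with h | h
            · have hnn' := hnn
              simp only [Wv] at h hnn' ⊢
              linarith
            · have h3 := h β hβ
              have h4 := hβblock a haMu
              have h5 := hsideβ
              simp only [Wv] at h4 h5 ⊢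
              linarith
          linarith
        constructor
        · rw [hsa]
          simpa [Matrix.cons_val_zero] using hkey
        · intro j
          have : j = 0 ∨ j = 1 := by omega
          rcases this with rfl | rfl
          · rw [hsa]
          · rw [hsa]
            simp only [Matrix.cons_val_zero, Matrix.cons_val_one, Matrix.head_cons]
            have h1 := hnSR a haMu
            push_neg at h1
            rcases hside a with h | h
            · linarith
            · linarith
      · have haMu : a ∈ Mu x y k s 1 := by simp [Mu, hsa, ha]
        constructor
        · rw [hsa]
          simpa [Matrix.cons_val_one] using hbmu 1 a haMu
        · intro j
          have : j = 0 ∨ j = 1 := by omega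
          rcases this with rfl | rfl
          · rw [hsa]
            simp only [Matrix.cons_val_zero, Matrix.cons_val_one, Matrix.head_cons]
            have := hW01 a
            linarith
          · rw [hsa]
  · by_cases hSR : ∃ a ∈ Mu x y k s 0, Wv x y a 0 < Wv x y a 1
    · -- facility 0 serves a strictly-right agent γ
      obtain ⟨γ, hγ, hγv⟩ := hSR
      have hγj : s γ = 0 ∧ srv x y k s γ := by simpa [Mu] using hγ
      have hnSL : ∀ b ∈ Mu x y k s 1, ¬ (Wv x y b 1 < Wv x y b 0) := by
        intro b hb hbv
        exact hSL ⟨b, hb, hbv⟩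
      have hγblock : ∀ b ∈ Mu x y k s 1, Wv x y γ 1 ≤ Wv x y b 1 := by
        intro b hb
        rcases srv_cross x y k s hNE γ hγj.2 1 with h | h
        · rw [hγj.1] at h
          rw [Wv, Wv] at hγv
          linarith
        · have := h b hb
          rw [Wv, Wv]; linarith
      have hF1 : ¬ ((Mu x y k s 1).card < k 1) := by
        intro hnf
        have h := notfull_fact x y k s hNE 1 hnf γ (by
          intro hh
          rw [hh.1] at hγj
          exact absurd hγj.1 (by decide))
        rw [utility_eq, if_pos hγj.2, hγj.1] at h
        rw [Wv, Wv] at hγv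
        linarith
      have hsideγ : Wv x y γ 1 = Wv x y γ 0 + δ := by
        rcases hside γ with h | h
        · linarith
        · exact h
      refine ⟨![bb 0, bb 0 + δ], ?_, ?_, ?_, ?_⟩
      · intro j
        have : j = 0 ∨ j = 1 := by omega
        rcases this with rfl | rfl
        · simpa [Matrix.cons_val_zero] using hb0 0
        · simp [Matrix.cons_val_one]; have := hb0 0; linarith
      · intro j hj
        have : j = 0 ∨ j = 1 := by omega
        rcases this with rfl | rfl
        · simpa [Matrix.cons_val_zero] using hbnf 0 hj
        · exact absurd hj hF1
      · intro u hu j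
        have : j = 0 ∨ j = 1 := by omega
        rcases this with rfl | rfl
        · simpa [Matrix.cons_val_zero] using hbu 0 u hu
        · have h1 := hW10 u
          have h2 := hbu 0 u hu
          simp only [Matrix.cons_val_one, Matrix.head_cons, Matrix.cons_val_zero]
          linarith
      · intro a ha
        have hsa : s a = 0 ∨ s a = 1 := by omega
        rcases hsa with hsa | hsa
        · have haMu : a ∈ Mu x y k s 0 := by simp [Mu, hsa, ha]
          constructor
          · rw [hsa]
            simpa [Matrix.cons_val_zero] using hbmu 0 a haMu
          · intro j
            have : j = 0 ∨ j = 1 := by omega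
            rcases this with rfl | rfl
            · rw [hsa]
            · rw [hsa]
              simp only [Matrix.cons_val_zero, Matrix.cons_val_one, Matrix.head_cons]
              have := hW10 a
              linarith
        · have haMu : a ∈ Mu x y k s 1 := by simp [Mu, hsa, ha]
          have hkey : bb 0 + δ ≤ Wv x y a 1 := by
            have hnn : 0 ≤ Wv x y a 1 - δ := by
              have h1 := hγblock a haMu
              have h2 := hWnn γ 0
              linarith
            have : bb 0 ≤ Wv x y a 1 - δ := by
              apply hble 0 _ hnn
              intro u hu
              rcases uns_fact x y k s hNE u hu 0 with h | h
              · have hnn' := hnn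
                simp only [Wv] at h hnn' ⊢
                linarith
              · have h3 := h γ hγ
                have h4 := hγblock a haMu
                have h5 := hsideγ
                simp only [Wv] at h4 h5 ⊢
                linarith
            linarith
          constructor
          · rw [hsa]
            simpa [Matrix.cons_val_one] using hkey
          · intro j
            have : j = 0 ∨ j = 1 := by omega
            rcases this with rfl | rfl
            · rw [hsa]
              simp only [Matrix.cons_val_zero, Matrix.cons_val_one, Matrix.head_cons]
              have h1 := hnSL a haMu
              push_neg at h1
              rcases hside a with h | h
              · linarith
              · linarith
            · rw [hsa]
    · -- neither: plain prices
      push_neg at hSL hSR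
      refine ⟨bb, hb0, hbnf, fun u hu j => hbu j u hu, ?_⟩
      intro a ha
      have hsa : s a = 0 ∨ s a = 1 := by omega
      rcases hsa with hsa | hsa
      · have haMu : a ∈ Mu x y k s 0 := by simp [Mu, hsa, ha]
        refine ⟨by rw [hsa]; exact hbmu 0 a haMu, ?_⟩
        intro j
        have : j = 0 ∨ j = 1 := by omega
        rcases this with rfl | rfl
        · rw [hsa]
        · rw [hsa]
          have h1 := hSR a haMu
          rcases hside a with h | h
          · linarith
          · linarith
      · have haMu : a ∈ Mu x y k s 1 := by simp [Mu, hsa, ha]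
        refine ⟨by rw [hsa]; exact hbmu 1 a haMu, ?_⟩
        intro j
        have : j = 0 ∨ j = 1 := by omega
        rcases this with rfl | rfl
        · rw [hsa]
          have h1 := hSL a haMu
          rcases hside a with h | h
          · linarith
          · linarith
        · rw [hsa]

end SBSAux
end SBSAux

open scoped Classical in
theorem SBS_is_ES' (n k₁ k₂ : ℕ) (hk : k₂ ≤ k₁) (hk₂ : 0 < k₂) (hn : k₁ + k₂ < n)
    (i : ℕ) (hi1 : 1 ≤ i) (hi2 : i < n) :
    ∀ x : Fin n → ℝ, InUnit x → ∀ s s',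
      isNE x ![sortedVal x (i-1), sortedVal x i] ![k₁, k₂] s →
      isNE x ![sortedVal x (i-1), sortedVal x i] ![k₁, k₂] s' →
      SW x ![sortedVal x (i-1), sortedVal x i] ![k₁, k₂] s
        = SW x ![sortedVal x (i-1), sortedVal x i] ![k₁, k₂] s' := by
  intro x hx s s' hs hs'
  set y : Fin 2 → ℝ := ![sortedVal x (i-1), sortedVal x i] with hy
  set k : Fin 2 → ℕ := ![k₁, k₂] with hk'
  have hi1' : i - 1 < n := by omega
  have hy0 : y 0 = x (Tuple.sort x ⟨i-1, hi1'⟩) := by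
    rw [hy]
    simp [sortedVal, hi1']
  have hy1 : y 1 = x (Tuple.sort x ⟨i, hi2⟩) := by
    rw [hy]
    simp [sortedVal, hi2]
  have hyIcc : ∀ j, y j ∈ Set.Icc (0:ℝ) 1 := by
    intro j
    have : j = 0 ∨ j = 1 := by omega
    rcases this with rfl | rfl
    · rw [hy0]; exact hx _
    · rw [hy1]; exact hx _
  have hy01 : y 0 ≤ y 1 := by
    rw [hy0, hy1]
    exact Tuple.monotone_sort x (by simp only [Fin.le_def]; omega)
  have hadj : ∀ a, x a ≤ y 0 ∨ y 1 ≤ x a := by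
    intro a
    set r : Fin n := (Tuple.sort x).symm a with hr
    have hxa : x a = (x ∘ Tuple.sort x) r := by
      simp [hr, Equiv.apply_symm_apply]
    rcases le_or_gt (r : ℕ) (i-1) with h | h
    · left
      rw [hxa, hy0]
      exact Tuple.monotone_sort x (by simp only [Fin.le_def]; omega)
    · right
      rw [hxa, hy1]
      exact Tuple.monotone_sort x (by simp only [Fin.le_def]; omega)
  have hkn : k 0 + k 1 < n := by
    rw [hk']
    simpa using hn
  exact le_antisymm
    (SBSAux.sw_le x y k s' hs' s hkn hx hyIcc hy01 hadj)
    (SBSAux.sw_le x y k s hs s' hkn hx hyIcc hy01 hadj)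


/-- Every Side-By-Side mechanism — placing the facility with capacity
`k₁` at the `i`-th sorted report and the facility with capacity `k₂` at the `(i+1)`-th
sorted report (1-based, `i ∈ [n-1]`) — is Equilibrium Stable. -/
theorem SBS_is_ES (n k₁ k₂ : ℕ) (hk : k₂ ≤ k₁) (hk₂ : 0 < k₂) (hn : k₁ + k₂ < n)
    (i : ℕ) (hi1 : 1 ≤ i) (hi2 : i < n) :
    EquilibriumStable (n := n) ![k₁, k₂]
      (fun x => ![sortedVal x (i - 1), sortedVal x i]) := by
  intro x hx s s' hs hs'
  exact SBS_is_ES' n k₁ k₂ hk hk₂ hn i hi1 hi2 x hx s s' hs hs'
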